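/- Let m ≥ 1. For all natural numbers n and s, as an identity in ℤ: P_m^n(s) = W_m(mn − s) + Σ_{i=1}^{m−1} (−1)^{m−i} Σ_{k=0}^{n i − s − s_{m−i}} W_i(k) · W_{m−i}(n i − s − s_{m−i} − k), where any inner sum whose upper limit is negative is empty (equals 0), and W_m(t) = 0 for t < 0. -/

import Mathlib

open Finset

/-- `W t d` : the number of tuples `x` of nonnegative integers with `∑ i, d i * x i = t`. -/
noncomputable def W (t : ℤ) (d : List ℕ) : ℕ :=
  Nat.card {x : Fin d.length → ℕ // ∑ i, (d.get i : ℤ) * (x i : ℤ) = t}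

/-- `Wm j t` : the restricted partition function `W(t, (1,2,…,j))`. -/
noncomputable def Wm (j : ℕ) (t : ℤ) : ℕ :=
  W t ((List.range j).map (· + 1))

/-- `P m n s` : the Gaussian polynomial coefficient, i.e. the number of tuples
`(x_1,…,x_m)` of nonnegative integers with `∑ i, i * x_i = s` and `∑ i, x_i ≤ n`. -/
noncomputable def P (m n s : ℕ) : ℕ :=
  Nat.card {x : Fin m → ℕ // (∑ i : Fin m, ((i : ℕ) + 1) * x i = s) ∧ ∑ i, x i ≤ n}

/-- `tri j = j(j+1)/2`, the `j`-th triangular number. -/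
def tri (j : ℕ) : ℕ := j * (j + 1) / 2

/-- weighted sum -/
def wsum {j : ℕ} (x : Fin j → ℕ) : ℤ := ∑ i : Fin j, (((i : ℕ) : ℤ) + 1) * (x i : ℤ)

lemma wsum_nonneg {j : ℕ} (x : Fin j → ℕ) : 0 ≤ wsum x :=
  Finset.sum_nonneg fun i _ => by positivity

lemma le_wsum {j : ℕ} (x : Fin j → ℕ) (i : Fin j) : (x i : ℤ) ≤ wsum x := by
  have h1 : (x i : ℤ) ≤ (((i : ℕ) : ℤ) + 1) * (x i : ℤ) := by
    have : (1 : ℤ) ≤ ((i : ℕ) : ℤ) + 1 := by omega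
    nlinarith [Int.ofNat_nonneg (x i)]
  exact h1.trans (Finset.single_le_sum (f := fun i : Fin j => (((i : ℕ) : ℤ) + 1) * (x i : ℤ))
    (fun i _ => by positivity) (Finset.mem_univ i))

instance wsum_finite {j : ℕ} (t : ℤ) : Finite {x : Fin j → ℕ // wsum x = t} := by
  have hb : ∀ x : {x : Fin j → ℕ // wsum x = t}, ∀ i, x.1 i < t.toNat + 1 := by
    intro x i
    have h1 := le_wsum x.1 i
    rw [x.2] at h1
    omega
  exact Finite.of_injective (fun x => (fun i => (⟨x.1 i, hb x i⟩ : Fin (t.toNat + 1))))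
    (by intro a b hab
        apply Subtype.ext; funext i
        exact congrArg Fin.val (congrFun hab i))

lemma Wm_eq (j : ℕ) (t : ℤ) : Wm j t = Nat.card {x : Fin j → ℕ // wsum x = t} := by
  unfold Wm W wsum
  apply Nat.card_congr
  have hlen : ((List.range j).map (· + 1)).length = j := by simp
  refine Equiv.subtypeEquiv (Equiv.arrowCongr (finCongr hlen) (Equiv.refl ℕ)) fun x => ?_
  have : (∑ i, ((((List.range j).map (· + 1)).get i : ℕ) : ℤ) * (x i : ℤ))
      = ∑ i : Fin j, (((i : ℕ) : ℤ) + 1) * ((x ((finCongr hlen).symm i) : ℕ) : ℤ) := by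
    rw [← Equiv.sum_comp (finCongr hlen)]
    apply Finset.sum_congr rfl
    intro i _
    simp [List.get_eq_getElem, finCongr]
  rw [this]
  simp [Equiv.arrowCongr]

lemma Wm_neg {j : ℕ} {t : ℤ} (ht : t < 0) : Wm j t = 0 := by
  rw [Wm_eq]
  have : IsEmpty {x : Fin j → ℕ // wsum x = t} := by
    constructor; rintro ⟨x, hx⟩
    exact absurd hx (by have := wsum_nonneg x; omega)
  exact Nat.card_of_isEmpty

lemma Wm_zero (t : ℤ) : Wm 0 t = if t = 0 then 1 else 0 := by
  rw [Wm_eq]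
  have h0 : ∀ x : Fin 0 → ℕ, wsum x = 0 := by
    intro x; simp [wsum]
  split_ifs with h
  · subst h
    have : Unique {x : Fin 0 → ℕ // wsum x = 0} :=
      ⟨⟨⟨fun i => i.elim0, h0 _⟩⟩, by rintro ⟨x, hx⟩; apply Subtype.ext; funext i; exact i.elim0⟩
    exact Nat.card_unique
  · have : IsEmpty {x : Fin 0 → ℕ // wsum x = t} := by
      constructor; rintro ⟨x, hx⟩; rw [h0 x] at hx; exact h hx.symm
    exact Nat.card_of_isEmpty

lemma wsum_split {j : ℕ} (x : Fin (j + 1) → ℕ) :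
    wsum x = wsum (fun i : Fin j => x i.castSucc) + ((j : ℤ) + 1) * (x (Fin.last j) : ℤ) := by
  unfold wsum
  rw [Fin.sum_univ_castSucc]
  simp

lemma wsum_update {j : ℕ} (x : Fin (j + 1) → ℕ) (v : ℕ) :
    wsum (Function.update x (Fin.last j) v)
      = wsum (fun i : Fin j => x i.castSucc) + ((j : ℤ) + 1) * (v : ℤ) := by
  rw [wsum_split]
  congr 1
  · unfold wsum
    apply Finset.sum_congr rfl
    intro i _
    dsimp only
    rw [Function.update_of_ne (Fin.ne_of_lt (Fin.castSucc_lt_last i))]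
  · rw [Function.update_self]

lemma wsum_snoc {j : ℕ} (y : Fin j → ℕ) (v : ℕ) :
    wsum (Fin.snoc y v) = wsum y + ((j : ℤ) + 1) * (v : ℤ) := by
  rw [wsum_split, Fin.snoc_last]
  congr 1
  unfold wsum
  apply Finset.sum_congr rfl
  intro i _
  dsimp only
  rw [Fin.snoc_castSucc]

def recEquiv (j : ℕ) (t : ℤ) :
    {x : Fin (j + 1) → ℕ // wsum x = t} ≃
      {y : Fin j → ℕ // wsum y = t} ⊕ {x : Fin (j + 1) → ℕ // wsum x = t - ((j : ℤ) + 1)} where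
  toFun x :=
    if h : x.1 (Fin.last j) = 0 then
      Sum.inl ⟨fun i => x.1 i.castSucc, by
        have := x.2; rw [wsum_split] at this; rw [h] at this; push_cast at this; linarith⟩
    else
      Sum.inr ⟨Function.update x.1 (Fin.last j) (x.1 (Fin.last j) - 1), by
        have hx := x.2; rw [wsum_split] at hx
        rw [wsum_update]
        have hv : ((x.1 (Fin.last j) - 1 : ℕ) : ℤ) = (x.1 (Fin.last j) : ℤ) - 1 := by
          have : 1 ≤ x.1 (Fin.last j) := Nat.one_le_iff_ne_zero.mpr h
          push_cast [this]; ring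
        rw [hv]; linarith⟩
  invFun z :=
    match z with
    | Sum.inl y => ⟨Fin.snoc y.1 0, by rw [wsum_snoc, y.2]; push_cast; ring⟩
    | Sum.inr x => ⟨Function.update x.1 (Fin.last j) (x.1 (Fin.last j) + 1), by
        have hx := x.2; rw [wsum_split] at hx
        rw [wsum_update]; push_cast; linarith⟩
  left_inv := by
    rintro ⟨x, hx⟩
    by_cases h : x (Fin.last j) = 0
    · simp only [h, dif_pos]
      apply Subtype.ext
      funext i
      dsimp only
      refine Fin.lastCases ?_ ?_ i
      · rw [Fin.snoc_last, h]
      · intro k; rw [Fin.snoc_castSucc]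
    · simp only [h, dif_neg, not_false_iff]
      apply Subtype.ext
      simp only [Function.update_self, Function.update_idem]
      have : x (Fin.last j) - 1 + 1 = x (Fin.last j) := by omega
      rw [this, Function.update_eq_self]
  right_inv := by
    rintro (⟨y, hy⟩ | ⟨x, hx⟩)
    · have h0 : (Fin.snoc y 0 : Fin (j + 1) → ℕ) (Fin.last j) = 0 := Fin.snoc_last _ _
      simp only [h0, dif_pos]
      congr 1
      apply Subtype.ext
      funext i
      dsimp only
      exact Fin.snoc_castSucc _ _ _
    · have h1 : Function.update x (Fin.last j) (x (Fin.last j) + 1) (Fin.last j) ≠ 0 := by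
        rw [Function.update_self]; omega
      simp only [h1, dif_neg, not_false_iff]
      congr 1
      apply Subtype.ext
      simp only [Function.update_self, Function.update_idem]
      have : x (Fin.last j) + 1 - 1 = x (Fin.last j) := by omega
      rw [this, Function.update_eq_self]

lemma Wm_rec (j : ℕ) (t : ℤ) : Wm (j + 1) t = Wm j t + Wm (j + 1) (t - ((j : ℤ) + 1)) := by
  rw [Wm_eq, Wm_eq, Wm_eq, Nat.card_congr (recEquiv j t), Nat.card_sum]

noncomputable def Conv (a b : ℕ) (T : ℤ) : ℤ :=
  ∑ k ∈ Finset.range (T + 1).toNat, (Wm a (k : ℤ) : ℤ) * (Wm b (T - (k : ℤ)) : ℤ)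

lemma Conv_neg {a b : ℕ} {T : ℤ} (hT : T < 0) : Conv a b T = 0 := by
  unfold Conv
  rw [show (T + 1).toNat = 0 by omega]
  simp

lemma Conv_zero_right (a : ℕ) (T : ℤ) : Conv a 0 T = (Wm a T : ℤ) := by
  rcases lt_or_ge T 0 with h | h
  · rw [Conv_neg h, Wm_neg h]; rfl
  · unfold Conv
    rw [Finset.sum_eq_single T.toNat]
    · rw [Wm_zero, show T - (T.toNat : ℤ) = 0 by omega]
      simp [show ((T.toNat : ℤ)) = T by omega]
    · intro k hk hne
      rw [Finset.mem_range] at hk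
      rw [Wm_zero, if_neg (by omega)]
      ring
    · intro hmem
      exact absurd (Finset.mem_range.mpr (by omega)) hmem

lemma Conv_zero_left (b : ℕ) (T : ℤ) : Conv 0 b T = (Wm b T : ℤ) := by
  rcases lt_or_ge T 0 with h | h
  · rw [Conv_neg h, Wm_neg h]; rfl
  · unfold Conv
    rw [Finset.sum_eq_single 0]
    · rw [Wm_zero]
      simp
    · intro k hk hne
      rw [Wm_zero, if_neg (by omega)]
      ring
    · intro hmem
      exact absurd (Finset.mem_range.mpr (by omega)) hmem

lemma Conv_comm (a b : ℕ) (T : ℤ) : Conv a b T = Conv b a T := by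
  rcases lt_or_ge T 0 with h | h
  · rw [Conv_neg h, Conv_neg h]
  · unfold Conv
    rw [← Finset.sum_range_reflect]
    apply Finset.sum_congr rfl
    intro k hk
    rw [Finset.mem_range] at hk
    rw [show (((T + 1).toNat - 1 - k : ℕ) : ℤ) = T - k by omega,
        show T - (T - (k : ℤ)) = (k : ℤ) by ring]
    ring

lemma Conv_rec_right (a b : ℕ) (T : ℤ) :
    Conv a (b + 1) T = Conv a b T + Conv a (b + 1) (T - ((b : ℤ) + 1)) := by
  unfold Conv
  have hsplit : ∀ k : ℕ, (Wm (b + 1) (T - (k : ℤ)) : ℤ)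
      = (Wm b (T - (k : ℤ)) : ℤ) + (Wm (b + 1) (T - ((b : ℤ) + 1) - (k : ℤ)) : ℤ) := by
    intro k
    rw [Wm_rec b (T - (k : ℤ))]
    push_cast
    ring_nf
  calc ∑ k ∈ Finset.range (T + 1).toNat, (Wm a (k : ℤ) : ℤ) * (Wm (b + 1) (T - (k : ℤ)) : ℤ)
      = ∑ k ∈ Finset.range (T + 1).toNat, ((Wm a (k : ℤ) : ℤ) * (Wm b (T - (k : ℤ)) : ℤ)
          + (Wm a (k : ℤ) : ℤ) * (Wm (b + 1) (T - ((b : ℤ) + 1) - (k : ℤ)) : ℤ)) := by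
        apply Finset.sum_congr rfl
        intro k _
        rw [hsplit k]
        ring
    _ = _ := by
        rw [Finset.sum_add_distrib]
        congr 1
        symm
        apply Finset.sum_subset
        · apply Finset.range_subset_range.mpr
          omega
        · intro k hk hnk
          rw [Finset.mem_range] at hk hnk
          push_neg at hnk
          rw [Wm_neg (show T - ((b : ℤ) + 1) - (k : ℤ) < 0 by omega)]
          ring

lemma Conv_rec_left (a b : ℕ) (T : ℤ) :
    Conv (a + 1) b T = Conv a b T + Conv (a + 1) b (T - ((a : ℤ) + 1)) := by
  rw [Conv_comm, Conv_rec_right, Conv_comm a b, Conv_comm (a+1) b]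

lemma tri_succ (j : ℕ) : tri (j + 1) = tri j + (j + 1) := by
  unfold tri
  have h : (j + 1) * (j + 1 + 1) = j * (j + 1) + 2 * (j + 1) := by ring
  omega

lemma tri_zero : tri 0 = 0 := rfl

noncomputable def G (m : ℕ) (t : ℤ) : ℤ :=
  ∑ j ∈ Finset.range (m + 1), (-1 : ℤ) ^ j * Conv (m - j) j (t - (tri j : ℤ))

lemma G_neg {m : ℕ} {t : ℤ} (ht : t < 0) : G m t = 0 := by
  unfold G
  apply Finset.sum_eq_zero
  intro j _
  rw [Conv_neg (by have : (0 : ℤ) ≤ (tri j : ℤ) := Int.ofNat_nonneg _; omega)]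
  ring

lemma G_rec (m : ℕ) (t : ℤ) :
    G (m + 1) t = G m t + G (m + 1) (t - ((m : ℤ) + 1)) - G m (t - ((m : ℤ) + 1)) := by
  set t' := t - ((m : ℤ) + 1) with ht'
  set f : ℕ → ℤ := fun j => (-1 : ℤ) ^ j *
      Conv (m + 1 - j) j (t - (tri j : ℤ) - ((m + 1 - j : ℕ) : ℤ)) with hf
  have claim1 : G (m + 1) t = G m t + ∑ j ∈ Finset.range (m + 2), f j := by
    unfold G
    rw [Finset.sum_range_succ (n := m + 1), Finset.sum_range_succ (f := f) (n := m + 1)]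
    have hmain : ∑ j ∈ Finset.range (m + 1), (-1 : ℤ) ^ j * Conv (m + 1 - j) j (t - (tri j : ℤ))
        = ∑ j ∈ Finset.range (m + 1), ((-1 : ℤ) ^ j * Conv (m - j) j (t - (tri j : ℤ)) + f j) := by
      apply Finset.sum_congr rfl
      intro j hj
      rw [Finset.mem_range] at hj
      have h1 : m + 1 - j = (m - j) + 1 := by omega
      have h2 : ((m - j + 1 : ℕ) : ℤ) = ((m - j : ℕ) : ℤ) + 1 := by push_cast; ring
      simp only [hf]
      rw [h1, h2, Conv_rec_left]
      ring
    rw [hmain, Finset.sum_add_distrib]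
    simp only [hf]
    have hlast : ((m + 1 - (m + 1) : ℕ) : ℤ) = 0 := by omega
    rw [hlast, sub_zero]
    ring
  have hf0 : f 0 = Conv (m + 1) 0 (t' - (tri 0 : ℤ)) := by
    simp only [hf, tri_zero, Nat.sub_zero, pow_zero, one_mul, Nat.cast_zero, sub_zero, ht']
    congr 1 <;> push_cast <;> ring
  set S : ℤ := ∑ j ∈ Finset.range (m + 1), (-1 : ℤ) ^ (j + 1) *
      Conv (m - j) (j + 1) (t' - (tri (j + 1) : ℤ)) with hS
  have claimA : ∑ j ∈ Finset.range (m + 1), f (j + 1)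
      = - G m t' + S := by
    have hmain : ∑ j ∈ Finset.range (m + 1), f (j + 1)
        = ∑ j ∈ Finset.range (m + 1), (-((-1 : ℤ) ^ j * Conv (m - j) j (t' - (tri j : ℤ)))
            + (-1 : ℤ) ^ (j + 1) * Conv (m - j) (j + 1) (t' - (tri (j + 1) : ℤ))) := by
      apply Finset.sum_congr rfl
      intro j hj
      rw [Finset.mem_range] at hj
      have h1 : m + 1 - (j + 1) = m - j := by omega
      have harg : t - (tri (j + 1) : ℤ) - ((m - j : ℕ) : ℤ)
          = t' - (tri j : ℤ) := by
        rw [tri_succ, ht']; push_cast; omega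
      have harg2 : t' - (tri j : ℤ) - ((j : ℤ) + 1) = t' - (tri (j + 1) : ℤ) := by
        rw [tri_succ]; push_cast; ring
      simp only [hf]
      rw [h1, harg, Conv_rec_right, harg2]
      ring
    rw [hmain, Finset.sum_add_distrib]
    unfold G
    rw [← Finset.sum_neg_distrib, hS]
  have claimB : G (m + 1) t' = S + f 0 := by
    unfold G
    rw [Finset.sum_range_succ' (fun j => (-1 : ℤ) ^ j * Conv (m + 1 - j) j (t' - (tri j : ℤ))) (m + 1)]
    simp only [Nat.sub_zero, pow_zero, one_mul]
    rw [hf0]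
    congr 1
    rw [hS]
    apply Finset.sum_congr rfl
    intro j hj
    rw [Finset.mem_range] at hj
    have h1 : m + 1 - (j + 1) = m - j := by omega
    rw [h1]
  have hsplit : ∑ j ∈ Finset.range (m + 2), f j
      = ∑ j ∈ Finset.range (m + 1), f (j + 1) + f 0 := Finset.sum_range_succ' f (m + 1)
  rw [claim1, hsplit, claimA]
  linarith [claimB]

lemma Wm_zero_cast (t : ℤ) : ((Wm 0 t : ℕ) : ℤ) = if t = 0 then 1 else 0 := by
  rw [Wm_zero]; split_ifs <;> simp

lemma G_zero_m (t : ℤ) : G 0 t = if t = 0 then 1 else 0 := by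
  unfold G
  rw [Finset.sum_range_one]
  simp only [Nat.sub_zero, pow_zero, one_mul, tri_zero, Nat.cast_zero, sub_zero]
  rw [Conv_zero_left, Wm_zero_cast]

lemma G_delta : ∀ m : ℕ, ∀ t : ℤ, G m t = if t = 0 then 1 else 0 := by
  intro m
  induction m with
  | zero => exact G_zero_m
  | succ m ih =>
    suffices h : ∀ N : ℕ, ∀ t : ℤ, t ≤ (N : ℤ) → G (m + 1) t = if t = 0 then 1 else 0 by
      intro t
      rcases lt_or_ge t 0 with ht | ht
      · rw [G_neg ht, if_neg (by omega)]
      · exact h t.toNat t (by omega)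
    intro N
    induction N with
    | zero =>
      intro t ht
      rcases lt_or_ge t 0 with h0 | h0
      · rw [G_neg h0, if_neg (by omega)]
      · have ht0 : t = 0 := by omega
        subst ht0
        rw [G_rec, ih, ih, G_neg (by omega), if_pos rfl, if_neg (by omega)]
        ring
    | succ N ihN =>
      intro t ht
      rcases le_or_gt t (N : ℤ) with h0 | h0
      · exact ihN t h0
      · rw [G_rec, ih, ih, ihN (t - ((m : ℤ) + 1)) (by omega)]
        ring

noncomputable def F (m : ℕ) (n : ℕ) (σ : ℤ) : ℤ :=
  ∑ j ∈ Finset.range (m + 1), (-1 : ℤ) ^ j *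
    Conv (m - j) j (((m - j : ℕ) : ℤ) * (n : ℤ) - σ - (tri j : ℤ))

lemma F_zero_n (m : ℕ) (σ : ℤ) : F m 0 σ = G m (-σ) := by
  unfold F G
  apply Finset.sum_congr rfl
  intro j _
  congr 1
  congr 1
  push_cast
  ring

lemma F_rec (m n : ℕ) (σ : ℤ) :
    F (m + 1) (n + 1) σ = F m (n + 1) (σ - ((n : ℤ) + 1)) + F (m + 1) n σ := by
  unfold F
  rw [Finset.sum_range_succ (n := m + 1), Finset.sum_range_succ (n := m + 1)
    (f := fun j => (-1 : ℤ) ^ j *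
      Conv (m + 1 - j) j (((m + 1 - j : ℕ) : ℤ) * (n : ℤ) - σ - (tri j : ℤ)))]
  have hmain : ∑ j ∈ Finset.range (m + 1), (-1 : ℤ) ^ j *
        Conv (m + 1 - j) j (((m + 1 - j : ℕ) : ℤ) * ((n + 1 : ℕ) : ℤ) - σ - (tri j : ℤ))
      = ∑ j ∈ Finset.range (m + 1),
          ((-1 : ℤ) ^ j * Conv (m - j) j (((m - j : ℕ) : ℤ) * ((n + 1 : ℕ) : ℤ) - (σ - ((n : ℤ) + 1)) - (tri j : ℤ))
           + (-1 : ℤ) ^ j * Conv (m + 1 - j) j (((m + 1 - j : ℕ) : ℤ) * (n : ℤ) - σ - (tri j : ℤ))) := by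
    apply Finset.sum_congr rfl
    intro j hj
    rw [Finset.mem_range] at hj
    have h1 : m + 1 - j = (m - j) + 1 := by omega
    have h2 : ((m - j + 1 : ℕ) : ℤ) = ((m - j : ℕ) : ℤ) + 1 := by push_cast; ring
    have h3 : ((n + 1 : ℕ) : ℤ) = (n : ℤ) + 1 := by push_cast; ring
    rw [h1, h2, h3, Conv_rec_left]
    rw [show (((m - j : ℕ) : ℤ) + 1) * ((n : ℤ) + 1) - σ - (tri j : ℤ)
        = ((m - j : ℕ) : ℤ) * ((n : ℤ) + 1) - (σ - ((n : ℤ) + 1)) - (tri j : ℤ) by ring]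
    rw [show ((m - j : ℕ) : ℤ) * ((n : ℤ) + 1) - (σ - ((n : ℤ) + 1)) - (tri j : ℤ) - (((m - j : ℕ) : ℤ) + 1)
        = (((m - j : ℕ) : ℤ) + 1) * (n : ℤ) - σ - (tri j : ℤ) by ring]
    ring
  rw [hmain, Finset.sum_add_distrib]
  simp only [Nat.sub_self, Nat.cast_zero, zero_mul]
  ring

lemma le_S1 {m : ℕ} (x : Fin m → ℕ) (i : Fin m) : x i ≤ ∑ i : Fin m, ((i : ℕ) + 1) * x i := by
  have h1 : x i ≤ ((i : ℕ) + 1) * x i := by nlinarith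
  exact h1.trans (Finset.single_le_sum (f := fun i : Fin m => ((i : ℕ) + 1) * x i)
    (fun _ _ => Nat.zero_le _) (Finset.mem_univ i))

instance P_finite (m n s : ℕ) :
    Finite {x : Fin m → ℕ // (∑ i : Fin m, ((i : ℕ) + 1) * x i = s) ∧ ∑ i, x i ≤ n} := by
  have hb : ∀ x : {x : Fin m → ℕ // (∑ i : Fin m, ((i : ℕ) + 1) * x i = s) ∧ ∑ i, x i ≤ n},
      ∀ i, x.1 i < s + 1 := by
    intro x i
    have := le_S1 x.1 i
    rw [x.2.1] at this
    omega
  exact Finite.of_injective (fun x => (fun i => (⟨x.1 i, hb x i⟩ : Fin (s + 1))))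
    (by intro a b hab
        apply Subtype.ext; funext i
        exact congrArg Fin.val (congrFun hab i))

lemma S0_le_S1 {m : ℕ} (x : Fin m → ℕ) : ∑ i, x i ≤ ∑ i : Fin m, ((i : ℕ) + 1) * x i := by
  apply Finset.sum_le_sum
  intro i _
  nlinarith

lemma P_zero_n (m s : ℕ) : P m 0 s = if s = 0 then 1 else 0 := by
  unfold P
  split_ifs with h
  · subst h
    have : Unique {x : Fin m → ℕ // (∑ i : Fin m, ((i : ℕ) + 1) * x i = 0) ∧ ∑ i, x i ≤ 0} := by
      refine ⟨⟨⟨fun _ => 0, by simp⟩⟩, ?_⟩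
      rintro ⟨x, hx1, hx2⟩
      apply Subtype.ext; funext i
      have h0 : ∑ i, x i = 0 := Nat.le_zero.mp hx2
      have := Finset.sum_eq_zero_iff.mp h0 i (Finset.mem_univ i)
      simpa using this
    exact Nat.card_unique
  · have : IsEmpty {x : Fin m → ℕ // (∑ i : Fin m, ((i : ℕ) + 1) * x i = s) ∧ ∑ i, x i ≤ 0} := by
      constructor
      rintro ⟨x, hx1, hx2⟩
      apply h
      have h0 : ∑ i, x i = 0 := Nat.le_zero.mp hx2
      rw [← hx1]
      apply Finset.sum_eq_zero
      intro i _
      have := Finset.sum_eq_zero_iff.mp h0 i (Finset.mem_univ i)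
      simp only [this, Nat.mul_zero]
    exact Nat.card_of_isEmpty

lemma P_zero_m (n s : ℕ) : P 0 n s = if s = 0 then 1 else 0 := by
  unfold P
  split_ifs with h
  · subst h
    have : Unique {x : Fin 0 → ℕ // (∑ i : Fin 0, ((i : ℕ) + 1) * x i = 0) ∧ ∑ i, x i ≤ n} := by
      refine ⟨⟨⟨fun i => i.elim0, by simp⟩⟩, ?_⟩
      rintro ⟨x, hx⟩
      apply Subtype.ext; funext i; exact i.elim0
    exact Nat.card_unique
  · have : IsEmpty {x : Fin 0 → ℕ // (∑ i : Fin 0, ((i : ℕ) + 1) * x i = s) ∧ ∑ i, x i ≤ n} := by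
      constructor
      rintro ⟨x, hx1, hx2⟩
      apply h
      simpa using hx1.symm
    exact Nat.card_of_isEmpty

lemma P_low {m n s : ℕ} (hs : s ≤ n) : P m (n + 1) s = P m n s := by
  unfold P
  apply Nat.card_congr
  apply Equiv.subtypeEquivRight
  intro x
  constructor
  · rintro ⟨h1, _⟩
    exact ⟨h1, by have := S0_le_S1 x; omega⟩
  · rintro ⟨h1, h2⟩
    exact ⟨h1, by omega⟩

lemma S1_split {m : ℕ} (x : Fin (m + 1) → ℕ) :
    ∑ i : Fin (m + 1), ((i : ℕ) + 1) * x i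
      = (∑ i : Fin (m + 1), x i) + ∑ i : Fin m, ((i : ℕ) + 1) * x i.succ := by
  rw [Fin.sum_univ_succ (f := fun i : Fin (m + 1) => ((i : ℕ) + 1) * x i),
      Fin.sum_univ_succ (f := fun i : Fin (m + 1) => x i)]
  have : ∑ i : Fin m, ((i.succ : ℕ) + 1) * x i.succ
      = ∑ i : Fin m, (x i.succ + ((i : ℕ) + 1) * x i.succ) := by
    apply Finset.sum_congr rfl
    intro i _
    rw [Fin.val_succ]
    ring
  rw [this, Finset.sum_add_distrib]
  simp only [Fin.val_zero]
  ring

lemma S1_cons_succ {m : ℕ} (a : ℕ) (y : Fin m → ℕ) :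
    ∑ i : Fin m, ((i : ℕ) + 1) * (Fin.cons a y : Fin (m + 1) → ℕ) i.succ
      = ∑ i : Fin m, ((i : ℕ) + 1) * y i := by
  apply Finset.sum_congr rfl
  intro i _
  simp

lemma S0_cons {m : ℕ} (a : ℕ) (y : Fin m → ℕ) :
    ∑ i : Fin (m + 1), (Fin.cons a y : Fin (m + 1) → ℕ) i = a + ∑ i, y i := by
  rw [Fin.sum_univ_succ]
  simp [Fin.cons_succ]

def pEquiv (m n s : ℕ) (hs : n + 1 ≤ s) :
    {x : Fin (m + 1) → ℕ // (∑ i : Fin (m + 1), ((i : ℕ) + 1) * x i = s) ∧ ∑ i, x i ≤ n + 1} ≃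
      {x : Fin (m + 1) → ℕ // (∑ i : Fin (m + 1), ((i : ℕ) + 1) * x i = s) ∧ ∑ i, x i ≤ n} ⊕
      {y : Fin m → ℕ // (∑ i : Fin m, ((i : ℕ) + 1) * y i = s - (n + 1)) ∧ ∑ i, y i ≤ n + 1} where
  toFun x :=
    if h : ∑ i, x.1 i ≤ n then Sum.inl ⟨x.1, x.2.1, h⟩
    else Sum.inr ⟨fun i => x.1 i.succ, by
      have h1 := x.2.1
      have h2 := x.2.2
      have h3 := S1_split x.1
      have h4 := Fin.sum_univ_succ (f := fun i : Fin (m + 1) => x.1 i)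
      refine ⟨?_, ?_⟩
      · show ∑ i : Fin m, ((i : ℕ) + 1) * x.1 i.succ = s - (n + 1)
        omega
      · show ∑ i : Fin m, x.1 i.succ ≤ n + 1
        omega⟩
  invFun z :=
    match z with
    | Sum.inl x => ⟨x.1, x.2.1, by have := x.2.2; omega⟩
    | Sum.inr y => ⟨Fin.cons (n + 1 - ∑ i, y.1 i) y.1, by
        have h1 := y.2.1
        have h2 := y.2.2
        have h3 := S1_split (Fin.cons (n + 1 - ∑ i, y.1 i) y.1 : Fin (m + 1) → ℕ)
        have h4 := S0_cons (n + 1 - ∑ i, y.1 i) y.1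
        rw [S1_cons_succ] at h3
        refine ⟨?_, ?_⟩
        · show ∑ i : Fin (m + 1), ((i : ℕ) + 1) * (Fin.cons (n + 1 - ∑ i, y.1 i) y.1 : Fin (m + 1) → ℕ) i = s
          omega
        · show ∑ i : Fin (m + 1), (Fin.cons (n + 1 - ∑ i, y.1 i) y.1 : Fin (m + 1) → ℕ) i ≤ n + 1
          omega⟩
  left_inv := by
    rintro ⟨x, hx1, hx2⟩
    by_cases h : ∑ i, x i ≤ n
    · simp only [h, dif_pos]
    · simp only [h, dif_neg, not_false_iff]
      apply Subtype.ext
      funext i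
      refine Fin.cases ?_ ?_ i
      · show (Fin.cons (n + 1 - ∑ i : Fin m, x i.succ) (fun i : Fin m => x i.succ) : Fin (m + 1) → ℕ) 0 = x 0
        rw [Fin.cons_zero]
        have h4 := Fin.sum_univ_succ (f := fun i : Fin (m + 1) => x i)
        omega
      · intro k
        show (Fin.cons (n + 1 - ∑ i : Fin m, x i.succ) (fun i : Fin m => x i.succ) : Fin (m + 1) → ℕ) k.succ = x k.succ
        rw [Fin.cons_succ]
  right_inv := by
    rintro (⟨x, hx1, hx2⟩ | ⟨y, hy1, hy2⟩)
    · simp only [hx2, dif_pos]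
    · have hS0 : ∑ i : Fin (m + 1), (Fin.cons (n + 1 - ∑ i, y i) y : Fin (m + 1) → ℕ) i = n + 1 := by
        rw [S0_cons]; omega
      have hno : ¬ (∑ i : Fin (m + 1), (Fin.cons (n + 1 - ∑ i, y i) y : Fin (m + 1) → ℕ) i ≤ n) := by
        omega
      simp only [hno, dif_neg, not_false_iff]
      refine congrArg Sum.inr (Subtype.ext ?_)
      funext i
      simp

lemma P_rec (m n s : ℕ) (hs : n + 1 ≤ s) :
    P (m + 1) (n + 1) s = P (m + 1) n s + P m (n + 1) (s - (n + 1)) := by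
  unfold P
  rw [Nat.card_congr (pEquiv m n s hs), Nat.card_sum]

lemma key : ∀ m n : ℕ, ∀ σ : ℤ, F m n σ = if 0 ≤ σ then (P m n σ.toNat : ℤ) else 0 := by
  intro m
  induction m with
  | zero =>
    intro n σ
    unfold F
    rw [Finset.sum_range_one]
    simp only [Nat.sub_zero, pow_zero, one_mul, tri_zero, Nat.cast_zero, Nat.cast_ofNat,
      sub_zero, zero_mul]
    rw [show (0 : ℤ) - σ = -σ by ring]
    rw [Conv_zero_left, Wm_zero_cast]
    rcases lt_or_ge σ 0 with h | h
    · rw [if_neg (show ¬(-σ = 0) by omega), if_neg (show ¬(0 ≤ σ) by omega)]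
    · rw [if_pos h, P_zero_m]
      rcases eq_or_ne σ 0 with rfl | hne
      · norm_num
      · rw [if_neg (show ¬(-σ = 0) by omega), if_neg (show ¬(σ.toNat = 0) by omega)]
        norm_num
  | succ m ihm =>
    intro n
    induction n with
    | zero =>
      intro σ
      rw [F_zero_n, G_delta]
      rcases lt_or_ge σ 0 with h | h
      · rw [if_neg (show ¬(-σ = 0) by omega), if_neg (show ¬(0 ≤ σ) by omega)]
      · rw [if_pos h, P_zero_n]
        rcases eq_or_ne σ 0 with rfl | hne
        · norm_num
        · rw [if_neg (show ¬(-σ = 0) by omega), if_neg (show ¬(σ.toNat = 0) by omega)]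
          norm_num
    | succ n ihn =>
      intro σ
      rw [F_rec, ihm (n + 1) (σ - ((n : ℤ) + 1)), ihn σ]
      rcases lt_or_ge σ 0 with h | h
      · rw [if_neg (show ¬(0 ≤ σ - ((n : ℤ) + 1)) by omega),
           if_neg (show ¬(0 ≤ σ) by omega), if_neg (show ¬(0 ≤ σ) by omega)]
        ring
      · rw [if_pos h, if_pos h]
        rcases lt_or_ge σ ((n : ℤ) + 1) with h2 | h2
        · rw [if_neg (show ¬(0 ≤ σ - ((n : ℤ) + 1)) by omega)]
          rw [P_low (show σ.toNat ≤ n by omega)]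
          ring
        · rw [if_pos (show 0 ≤ σ - ((n : ℤ) + 1) by omega)]
          rw [P_rec m n σ.toNat (by omega)]
          rw [show (σ - ((n : ℤ) + 1)).toNat = σ.toNat - (n + 1) by omega]
          push_cast
          ring

/-- `P_m^n(s) = W_m(mn−s) + Σ_{i=1}^{m−1} (−1)^{m−i}
Σ_{k=0}^{n i − s − s_{m−i}} W_i(k) W_{m−i}(n i − s − s_{m−i} − k)`,
where a sum with a negative upper limit is empty. -/
theorem gaussian_convolution_formula (m : ℕ) (hm : 1 ≤ m) (n s : ℕ) :
    (P m n s : ℤ) = (Wm m ((m : ℤ) * (n : ℤ) - (s : ℤ)) : ℤ) +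
      ∑ i ∈ Finset.Icc 1 (m - 1), (-1 : ℤ) ^ (m - i) *
        ∑ k ∈ Finset.range
            (((n : ℤ) * (i : ℤ) - (s : ℤ) - (tri (m - i) : ℤ) + 1).toNat),
          (Wm i (k : ℤ) : ℤ) *
            (Wm (m - i) ((n : ℤ) * (i : ℤ) - (s : ℤ) - (tri (m - i) : ℤ) - (k : ℤ)) : ℤ) := by
  obtain ⟨M, rfl⟩ : ∃ M, m = M + 1 := ⟨m - 1, by omega⟩
  have hP : (P (M + 1) n s : ℤ) = F (M + 1) n (s : ℤ) := by
    rw [key]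
    rw [if_pos (show (0 : ℤ) ≤ (s : ℤ) by positivity)]
    simp
  rw [hP]
  set fterm : ℕ → ℤ := fun j => (-1 : ℤ) ^ j *
      Conv (M + 1 - j) j (((M + 1 - j : ℕ) : ℤ) * (n : ℤ) - (s : ℤ) - (tri j : ℤ)) with hfterm
  have hsplit : F (M + 1) n (s : ℤ)
      = ∑ j ∈ Finset.range M, fterm (j + 1) + fterm (M + 1) + fterm 0 := by
    unfold F
    rw [Finset.sum_range_succ' fterm (M + 1), Finset.sum_range_succ (fun k => fterm (k + 1)) M]
  rw [hsplit]
  -- the term j = M + 1 vanishes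
  have hlastzero : fterm (M + 1) = 0 := by
    simp only [hfterm, Nat.sub_self, Nat.cast_zero, zero_mul]
    rw [Conv_zero_left, Wm_neg (show (0 : ℤ) - (s : ℤ) - (tri (M + 1) : ℤ) < 0 by
      have h1 := tri_succ M
      omega)]
    ring
  -- the term j = 0 is the Wm term
  have hzero : fterm 0 = (Wm (M + 1) (((M + 1 : ℕ) : ℤ) * (n : ℤ) - (s : ℤ)) : ℤ) := by
    simp only [hfterm, Nat.sub_zero, pow_zero, one_mul, tri_zero, Nat.cast_zero, sub_zero]
    rw [Conv_zero_right]
  -- the middle sum matches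
  have hmid : ∑ j ∈ Finset.range M, fterm (j + 1)
      = ∑ i ∈ Finset.Icc 1 (M + 1 - 1), (-1 : ℤ) ^ (M + 1 - i) *
        ∑ k ∈ Finset.range
            (((n : ℤ) * (i : ℤ) - (s : ℤ) - (tri (M + 1 - i) : ℤ) + 1).toNat),
          (Wm i (k : ℤ) : ℤ) *
            (Wm (M + 1 - i) ((n : ℤ) * (i : ℤ) - (s : ℤ) - (tri (M + 1 - i) : ℤ) - (k : ℤ)) : ℤ) := by
    rw [show M + 1 - 1 = M from rfl]
    apply Finset.sum_nbij' (i := fun j => M - j) (j := fun i => M - i)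
    · intro a ha
      rw [Finset.mem_range] at ha
      rw [Finset.mem_Icc]
      omega
    · intro a ha
      rw [Finset.mem_Icc] at ha
      rw [Finset.mem_range]
      omega
    · intro a ha
      rw [Finset.mem_range] at ha
      omega
    · intro a ha
      rw [Finset.mem_Icc] at ha
      omega
    · intro j hj
      rw [Finset.mem_range] at hj
      have h1 : M + 1 - (j + 1) = M - j := by omega
      have h2 : M + 1 - (M - j) = j + 1 := by omega
      simp only [hfterm, h1, h2]
      have h3 : ((M - j : ℕ) : ℤ) * (n : ℤ) - (s : ℤ) - (tri (j + 1) : ℤ)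
          = (n : ℤ) * ((M - j : ℕ) : ℤ) - (s : ℤ) - (tri (j + 1) : ℤ) := by ring
      rw [h3]
      rfl
  rw [hlastzero, hzero, hmid]
  push_cast
  ring
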